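/- Define delta_g^{(2c)} recursively by delta_1^{(2c)} = d - c for 0 <= c <= d-1, and delta_{g+1}^{(2c)} = sum_{a=0}^{d-1} (d - max(a,c)) * delta_g^{(2a)}. Then delta_2^{(2c)} = (p^3 - (6c^2+6c+1)p + 4c^3 + 6c^2 + 2c)/24, where p = 2d+1. -/

import Mathlib

/-- `delta d g c` is `δ_g^{(2c)}` for `p = 2d+1`, with `δ_0^{(0)} = 1`, `δ_0^{(2c)} = 0` for
`c ≠ 0`, and `δ_{g+1}^{(2c)} = ∑_{a=0}^{d-1} (d - max a c) δ_g^{(2a)}`; in particular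
`δ_1^{(2c)} = d - c`. -/
def delta (d : ℕ) : ℕ → ℕ → ℚ
  | 0, c => if c = 0 then 1 else 0
  | g + 1, c => ∑ a ∈ Finset.range d, ((d : ℚ) - max a c) * delta d g a

lemma sum_id_q (n : ℕ) : ∑ i ∈ Finset.range n, (i : ℚ) = n * (n - 1) / 2 := by
  induction n with
  | zero => simp
  | succ k ih => rw [Finset.sum_range_succ, ih]; push_cast; ring

lemma sum_sq_q (n : ℕ) : ∑ i ∈ Finset.range n, (i : ℚ) ^ 2 = n * (n - 1) * (2 * n - 1) / 6 := by
  induction n with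
  | zero => simp
  | succ k ih => rw [Finset.sum_range_succ, ih]; push_cast; ring

lemma delta_one (d a : ℕ) (hd : 1 ≤ d) : delta d 1 a = (d : ℚ) - a := by
  show (∑ b ∈ Finset.range d, ((d : ℚ) - max b a) * delta d 0 b) = (d : ℚ) - a
  rw [Finset.sum_eq_single 0]
  · show ((d : ℚ) - ((max 0 a : ℕ) : ℚ)) * (if (0:ℕ) = 0 then (1:ℚ) else 0) = (d : ℚ) - a
    rw [max_eq_right (Nat.zero_le a)]
    simp
  · intro b _ hb
    show ((d : ℚ) - ((max b a : ℕ) : ℚ)) * (if b = 0 then (1:ℚ) else 0) = 0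
    simp [hb]
  · intro h; exact absurd (Finset.mem_range.mpr hd) h

lemma sum_d_sub (n : ℕ) (x : ℚ) :
    ∑ i ∈ Finset.range n, (x - (i : ℚ)) = n * x - n * (n - 1) / 2 := by
  rw [Finset.sum_sub_distrib, Finset.sum_const, Finset.card_range, sum_id_q]
  ring

lemma sum_rev_sq (n : ℕ) :
    ∑ i ∈ Finset.range n, ((n : ℚ) - i) ^ 2 = n * (n + 1) * (2 * n + 1) / 6 := by
  have : ∀ i ∈ Finset.range n, ((n : ℚ) - i) ^ 2
      = (n : ℚ) ^ 2 - 2 * n * i + (i : ℚ) ^ 2 := fun i _ => by ring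
  rw [Finset.sum_congr rfl this, Finset.sum_add_distrib, Finset.sum_sub_distrib,
    Finset.sum_const, Finset.card_range, ← Finset.mul_sum, sum_id_q, sum_sq_q]
  ring

theorem delta_two (d c : ℕ) (hd : 1 ≤ d) (hc : c < d) :
    delta d 2 c =
      ((2 * (d : ℚ) + 1) ^ 3 - (6 * (c : ℚ) ^ 2 + 6 * c + 1) * (2 * (d : ℚ) + 1)
        + 4 * (c : ℚ) ^ 3 + 6 * (c : ℚ) ^ 2 + 2 * c) / 24 := by
  have h1 : delta d 2 c = ∑ a ∈ Finset.range d, ((d : ℚ) - ((max a c : ℕ) : ℚ)) * ((d : ℚ) - a) := by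
    show (∑ a ∈ Finset.range d, ((d : ℚ) - ((max a c : ℕ) : ℚ)) * delta d 1 a) = _
    exact Finset.sum_congr rfl fun a _ => by rw [delta_one d a hd]
  rw [h1, Finset.range_eq_Ico, ← Finset.sum_Ico_consecutive _ (Nat.zero_le c) hc.le]
  have h2 : ∑ a ∈ Finset.Ico 0 c, ((d : ℚ) - ((max a c : ℕ) : ℚ)) * ((d : ℚ) - a)
      = ((d : ℚ) - c) * ((c : ℚ) * d - (c : ℚ) * ((c : ℚ) - 1) / 2) := by
    rw [← Finset.range_eq_Ico]
    have : ∀ a ∈ Finset.range c, ((d : ℚ) - ((max a c : ℕ) : ℚ)) * ((d : ℚ) - a)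
        = ((d : ℚ) - c) * ((d : ℚ) - a) := by
      intro a ha
      rw [max_eq_right (Finset.mem_range.mp ha).le]
    rw [Finset.sum_congr rfl this, ← Finset.mul_sum, sum_d_sub]
  have h3 : ∑ a ∈ Finset.Ico c d, ((d : ℚ) - ((max a c : ℕ) : ℚ)) * ((d : ℚ) - a)
      = ((d : ℚ) - c) * (((d : ℚ) - c) + 1) * (2 * ((d : ℚ) - c) + 1) / 6 := by
    have : ∀ a ∈ Finset.Ico c d, ((d : ℚ) - ((max a c : ℕ) : ℚ)) * ((d : ℚ) - a)
        = ((d : ℚ) - a) ^ 2 := by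
      intro a ha
      rw [max_eq_left (Finset.mem_Ico.mp ha).1]
      ring
    rw [Finset.sum_congr rfl this, Finset.sum_Ico_eq_sum_range]
    have hmc : ((d - c : ℕ) : ℚ) = (d : ℚ) - c := by rw [Nat.cast_sub hc.le]
    have h4 : ∀ i ∈ Finset.range (d - c), ((d : ℚ) - (c + i : ℕ)) ^ 2
        = (((d - c : ℕ) : ℚ) - i) ^ 2 := by
      intro i _
      rw [hmc]; push_cast; ring
    rw [Finset.sum_congr rfl h4, sum_rev_sq, hmc]
  rw [h2, h3]
  ring
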